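/- Let h : ℝ² → ℝ be twice continuously differentiable and let ω : ℂ → ℂ be entire (holomorphic on all of ℂ). Define A₁ := −∂₂h, A₂ := ∂₁h, and ψ(x₁, x₂) := ω(x₁ + i x₂) · e^{−h(x₁, x₂)}. Then ψ satisfies the zero-mode equation (−i∂₁ψ − A₁ψ) + i(−i∂₂ψ − A₂ψ) = 0 everywhere on ℝ². -/

import Mathlib

open MeasureTheory

/-- Aharonov–Casher zero modes: for `A = (-∂₂h, ∂₁h)` and `ω` entire, the function
`ψ(x) = ω(x₁ + ix₂) e^{-h(x)}` satisfies `(p₁ - A₁)ψ + i(p₂ - A₂)ψ = 0`. -/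
theorem stmt_10 (h : ℝ × ℝ → ℝ) (hh : ContDiff ℝ 2 h)
    (ω : ℂ → ℂ) (hω : Differentiable ℂ ω)
    (A₁ A₂ : ℝ × ℝ → ℝ)
    (hA₁ : ∀ x : ℝ × ℝ, A₁ x = -(fderiv ℝ h x (0, 1)))
    (hA₂ : ∀ x : ℝ × ℝ, A₂ x = fderiv ℝ h x (1, 0))
    (ψ : ℝ × ℝ → ℂ)
    (hψ : ∀ x : ℝ × ℝ, ψ x = ω ((x.1 : ℂ) + Complex.I * (x.2 : ℂ)) *
      Complex.exp (-(h x : ℂ))) :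
    ∀ x : ℝ × ℝ,
      (-Complex.I * fderiv ℝ ψ x (1, 0) - (A₁ x : ℂ) * ψ x)
        + Complex.I * (-Complex.I * fderiv ℝ ψ x (0, 1) - (A₂ x : ℂ) * ψ x) = 0 := by
  intro x
  have hψfun : ψ = fun y : ℝ × ℝ => ω ((y.1 : ℂ) + Complex.I * (y.2 : ℂ)) *
      Complex.exp (-(h y : ℂ)) := funext hψ
  set z : ℂ := (x.1 : ℂ) + Complex.I * (x.2 : ℂ) with hz
  set L : (ℝ × ℝ) →L[ℝ] ℂ :=
    Complex.ofRealCLM.comp (ContinuousLinearMap.fst ℝ ℝ ℝ) +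
      Complex.I • Complex.ofRealCLM.comp (ContinuousLinearMap.snd ℝ ℝ ℝ) with hL
  have hLfun : (fun y : ℝ × ℝ => (y.1 : ℂ) + Complex.I * (y.2 : ℂ)) = ⇑L := by
    funext y
    simp [hL, smul_eq_mul]
  have hg : HasFDerivAt (fun y : ℝ × ℝ => (y.1 : ℂ) + Complex.I * (y.2 : ℂ)) L x := by
    rw [hLfun]; exact L.hasFDerivAt
  have hωg : HasFDerivAt (fun y : ℝ × ℝ => ω ((y.1 : ℂ) + Complex.I * (y.2 : ℂ)))
      (deriv ω z • L) x := by
    have h1 : HasFDerivAt ω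
        ((((1 : ℂ →L[ℂ] ℂ).smulRight (deriv ω z))).restrictScalars ℝ) z :=
      ((hω z).hasDerivAt.hasFDerivAt).restrictScalars ℝ
    have h2 := h1.comp x hg
    have h3 : ((((1 : ℂ →L[ℂ] ℂ).smulRight (deriv ω z))).restrictScalars ℝ).comp L
        = deriv ω z • L := by
      ext <;> simp [mul_comm]
    rwa [h3] at h2
  have hhd : HasFDerivAt h (fderiv ℝ h x) x :=
    (hh.differentiable (by norm_num) x).hasFDerivAt
  have hhc : HasFDerivAt (fun y : ℝ × ℝ => -(h y : ℂ))
      (-(Complex.ofRealCLM.comp (fderiv ℝ h x))) x := by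
    exact (Complex.ofRealCLM.hasFDerivAt.comp x hhd).neg
  have hexp : HasFDerivAt (fun y : ℝ × ℝ => Complex.exp (-(h y : ℂ)))
      (Complex.exp (-(h x : ℂ)) • (-(Complex.ofRealCLM.comp (fderiv ℝ h x)))) x :=
    (Complex.hasDerivAt_exp _).comp_hasFDerivAt x hhc
  have hmul := hωg.mul hexp
  have hDψ : fderiv ℝ ψ x =
      ω z • (Complex.exp (-(h x : ℂ)) • (-(Complex.ofRealCLM.comp (fderiv ℝ h x)))) +
        Complex.exp (-(h x : ℂ)) • (deriv ω z • L) := by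
    rw [hψfun]
    exact hmul.fderiv
  rw [hDψ, hψ x, hA₁ x, hA₂ x, ← hz]
  simp only [ContinuousLinearMap.add_apply, ContinuousLinearMap.coe_smul',
    Pi.smul_apply, ContinuousLinearMap.neg_apply, ContinuousLinearMap.coe_comp',
    Function.comp_apply, Complex.ofRealCLM_apply, hL, ContinuousLinearMap.smul_apply,
    ContinuousLinearMap.coe_fst', ContinuousLinearMap.coe_snd', smul_eq_mul]
  push_cast
  have h2 : (Complex.I : ℂ) ^ 2 = -1 := Complex.I_sq
  have h3 : (Complex.I : ℂ) ^ 3 = -Complex.I := by rw [pow_succ, h2]; ring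
  ring_nf
  rw [h2, h3]
  ring
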